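/- arXiv:math/9910145 — 2 statements merged into one kernel-verified Lean document; each statement's English description precedes it below -/
import Mathlib

section
/- For every integer N ≥ 1, ord(A,N) ≥ (∏_{p | d_0(N)} ord(A,p)) / L(N), where the product runs over the distinct prime divisors p of d_0(N). -/
open Matrix Finset

/-- `matOrd A N` is the order of `A` modulo `N`: the least `k ≥ 1`
with `A^k ≡ I (mod N)`. -/
noncomputable def matOrd (A : Matrix (Fin 2) (Fin 2) ℤ) (N : ℕ) : ℕ :=
  sInf {k | 0 < k ∧ ∀ i j, (N : ℤ) ∣ (A ^ k - 1) i j}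

/-- The squarefree part `d` of `N = d·s²`, where `s²` is the largest square
dividing `N`. -/
noncomputable def sqfPart (N : ℕ) : ℕ :=
  ∏ p ∈ N.primeFactors, p ^ (N.factorization p % 2)

/-- `d₀(N) = d / gcd(d, D_A)` where `N = d·s²` with `d` squarefree and
`D_A = 4(tr(A)² - 4)`. -/
noncomputable def dZero (A : Matrix (Fin 2) (Fin 2) ℤ) (N : ℕ) : ℕ :=
  sqfPart N / Nat.gcd (sqfPart N) (4 * (A.trace ^ 2 - 4)).natAbs

open Classical in
/-- `χ(p) = 1` if `tr(A)² - 4` is a nonzero square mod `p`, `-1` otherwise. -/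
noncomputable def chi (A : Matrix (Fin 2) (Fin 2) ℤ) (p : ℕ) : ℤ :=
  if ((A.trace ^ 2 - 4 : ℤ) : ZMod p) ≠ 0 ∧ IsSquare ((A.trace ^ 2 - 4 : ℤ) : ZMod p)
  then 1 else -1

/-- `L(N) = (∏_{p ∣ d₀(N)} (p - χ(p))) / lcm{p - χ(p) : p ∣ d₀(N)}`. -/
noncomputable def LN (A : Matrix (Fin 2) (Fin 2) ℤ) (N : ℕ) : ℕ :=
  (∏ p ∈ (dZero A N).primeFactors, ((p : ℤ) - chi A p).natAbs) /
    (dZero A N).primeFactors.lcm (fun p => ((p : ℤ) - chi A p).natAbs)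

/-! ### Auxiliary lemmas -/

lemma chi_cases (A : Matrix (Fin 2) (Fin 2) ℤ) (p : ℕ) : chi A p = 1 ∨ chi A p = -1 := by
  unfold chi; split
  · exact Or.inl rfl
  · exact Or.inr rfl

lemma pow_eq_one_of_roots {K : Type*} [Field K] (B : Matrix (Fin 2) (Fin 2) K)
    (t l m : K) (hB : B ^ 2 = t • B - 1) (hsum : l + m = t) (hprod : l * m = 1)
    (hne : l ≠ m) (k : ℕ) (hl : l ^ k = 1) (hm : m ^ k = 1) : B ^ k = 1 := by
  have hlm : l - m ≠ 0 := sub_ne_zero.mpr hne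
  obtain ⟨e, he⟩ : ∃ e, e = (l - m)⁻¹ • (B - m • (1 : Matrix (Fin 2) (Fin 2) K)) := ⟨_, rfl⟩
  obtain ⟨f, hf⟩ : ∃ f, f = (l - m)⁻¹ • (l • (1 : Matrix (Fin 2) (Fin 2) K) - B) := ⟨_, rfl⟩
  have hef : e + f = 1 := by
    rw [he, hf, ← smul_add]
    have : (B - m • 1) + (l • 1 - B) = (l - m) • (1 : Matrix (Fin 2) (Fin 2) K) := by
      rw [sub_smul]; abel
    rw [this, smul_smul, inv_mul_cancel₀ hlm, one_smul]
  have hBe : B * e = l • e := by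
    rw [he, Matrix.mul_smul, smul_comm]
    congr 1
    rw [mul_sub, Matrix.mul_smul, mul_one, ← pow_two, hB, smul_sub, ← hsum,
      add_smul, smul_smul, hprod, one_smul]
    abel
  have hBf : B * f = m • f := by
    rw [hf, Matrix.mul_smul, smul_comm]
    congr 1
    rw [mul_sub, Matrix.mul_smul, mul_one, ← pow_two, hB, smul_sub, ← hsum,
      add_smul, smul_smul, mul_comm m l, hprod, one_smul]
    abel
  have key : ∀ n : ℕ, B ^ n = l ^ n • e + m ^ n • f := by
    intro n
    induction n with
    | zero => simpa using hef.symm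
    | succ n ih =>
      rw [pow_succ', ih, mul_add, Matrix.mul_smul, Matrix.mul_smul, hBe, hBf,
        smul_smul, smul_smul, ← pow_succ, ← pow_succ]
  rw [key k, hl, hm, one_smul, one_smul, hef]

lemma sq_map (A : Matrix (Fin 2) (Fin 2) ℤ) (hA : A.det = 1) {R : Type*} [CommRing R] :
    (A.map (Int.cast : ℤ → R)) ^ 2 = (A.trace : R) • A.map (Int.cast : ℤ → R) - 1 := by
  have hdet : A 0 0 * A 1 1 - A 0 1 * A 1 0 = 1 := by
    rw [Matrix.det_fin_two] at hA; linarith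
  have hd : (A 0 0 : R) * (A 1 1 : R) - (A 0 1 : R) * (A 1 0 : R) = 1 := by
    exact_mod_cast congrArg (Int.cast : ℤ → R) hdet
  ext i j
  fin_cases i <;> fin_cases j <;>
    simp [pow_two, Matrix.mul_apply, Fin.sum_univ_two, Matrix.trace_fin_two,
      Matrix.one_apply, Matrix.map_apply] <;>
    push_cast <;> ring_nf
  all_goals (try linear_combination hd); all_goals (try linear_combination -hd)
  all_goals (try linear_combination (2:R)*hd); all_goals linear_combination (-2:R)*hd

lemma frob_fixed {p : ℕ} [Fact p.Prime] {K : Type*} [Field K] [Algebra (ZMod p) K]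
    [Finite K] {r : K} (hr : r ^ p = r) :
    ∃ y : ZMod p, algebraMap (ZMod p) K y = r := by
  classical
  by_contra hcon
  push_neg at hcon
  set g := algebraMap (ZMod p) K with hg
  have hp2 : 2 ≤ p := (Fact.out : p.Prime).two_le
  set P : Polynomial K := Polynomial.X ^ p - Polynomial.X with hP
  have hPne : P ≠ 0 := fun h => by
    have : P.coeff p = 1 := by
      rw [hP, Polynomial.coeff_sub, Polynomial.coeff_X_pow, if_pos rfl,
        Polynomial.coeff_X, if_neg (by omega), sub_zero]
    rw [h] at this; simp at this
  have hdeg : P.natDegree ≤ p := by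
    refine le_trans (Polynomial.natDegree_sub_le _ _) ?_
    simp [Polynomial.natDegree_X_pow, Polynomial.natDegree_X]; omega
  set S : Finset K := insert r ((Finset.univ : Finset (ZMod p)).image g) with hS
  have hsub : S ⊆ P.roots.toFinset := by
    intro x hx
    rw [Multiset.mem_toFinset, Polynomial.mem_roots hPne]
    rw [hS, Finset.mem_insert] at hx
    rcases hx with rfl | hx
    · simp [hP, Polynomial.IsRoot, hr]
    · obtain ⟨y, _, rfl⟩ := Finset.mem_image.mp hx
      have : (g y) ^ p = g y := by rw [← map_pow, ZMod.pow_card]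
      simp [hP, Polynomial.IsRoot, this]
  have hcard : S.card = p + 1 := by
    rw [hS, Finset.card_insert_of_notMem (by
      intro hmem
      obtain ⟨y, _, hy⟩ := Finset.mem_image.mp hmem
      exact hcon y hy)]
    rw [Finset.card_image_of_injective _ (algebraMap (ZMod p) K).injective]
    simp [ZMod.card]
  have : p + 1 ≤ p := by
    calc p + 1 = S.card := hcard.symm
    _ ≤ P.roots.toFinset.card := Finset.card_le_card hsub
    _ ≤ Multiset.card P.roots := P.roots.toFinset_card_le
    _ ≤ P.natDegree := P.card_roots'
    _ ≤ p := hdeg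
  omega

lemma mat_unit (A : Matrix (Fin 2) (Fin 2) ℤ) (hA : A.det = 1) (n : ℕ) :
    IsUnit (A.map (Int.cast : ℤ → ZMod n)) := by
  apply (Matrix.isUnit_iff_isUnit_det _).mpr
  have : (A.map (Int.cast : ℤ → ZMod n)).det = ((A.det : ℤ) : ZMod n) :=
    (RingHom.map_det (Int.castRingHom (ZMod n)) A).symm
  rw [this, hA]; simp

lemma orderOf_map_pos (A : Matrix (Fin 2) (Fin 2) ℤ) (hA : A.det = 1) (n : ℕ) [NeZero n] :
    0 < orderOf (A.map (Int.cast : ℤ → ZMod n)) := by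
  obtain ⟨u, hu⟩ := mat_unit A hA n
  rw [← hu, orderOf_units]
  exact orderOf_pos u

lemma matOrd_eq_orderOf (A : Matrix (Fin 2) (Fin 2) ℤ) (hA : A.det = 1) (n : ℕ) [NeZero n] :
    matOrd A n = orderOf (A.map (Int.cast : ℤ → ZMod n)) := by
  set φ : ℤ →+* ZMod n := Int.castRingHom (ZMod n) with hφ
  have hBdef : A.map (Int.cast : ℤ → ZMod n) = φ.mapMatrix A := rfl
  set B := A.map (Int.cast : ℤ → ZMod n) with hB
  obtain ⟨u, hu⟩ := mat_unit A hA n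
  rw [← hB] at hu
  have hordB : orderOf B = orderOf u := by rw [← hu, orderOf_units]
  have hpos : 0 < orderOf B := by rw [hordB]; exact orderOf_pos u
  have hpow : B ^ orderOf B = 1 := by
    rw [hordB, ← hu, ← Units.val_pow_eq_pow_val, pow_orderOf_eq_one, Units.val_one]
  have hmap : ∀ k : ℕ, B ^ k - 1 = (A ^ k - 1).map (Int.cast : ℤ → ZMod n) := by
    intro k
    have : (A ^ k - 1).map (Int.cast : ℤ → ZMod n) = φ.mapMatrix (A ^ k - 1) := rfl
    rw [this, map_sub, map_pow, _root_.map_one, ← hBdef]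
  have hiff : ∀ k : ℕ, (∀ i j, (n : ℤ) ∣ (A ^ k - 1) i j) ↔ B ^ k = 1 := by
    intro k
    rw [← sub_eq_zero (a := B ^ k), hmap k]
    constructor
    · intro h
      ext i j
      simp only [Matrix.map_apply, Matrix.zero_apply]
      exact (ZMod.intCast_zmod_eq_zero_iff_dvd _ n).mpr (h i j)
    · intro h i j
      have h2 : ((A ^ k - 1) i j : ZMod n) = 0 := congrFun (congrFun h i) j
      exact (ZMod.intCast_zmod_eq_zero_iff_dvd _ n).mp h2
  have hmem : orderOf B ∈ {k | 0 < k ∧ ∀ i j, (n : ℤ) ∣ (A ^ k - 1) i j} :=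
    ⟨hpos, (hiff _).mpr hpow⟩
  apply le_antisymm (Nat.sInf_le hmem)
  have hsmem := Nat.sInf_mem (⟨_, hmem⟩ :
    {k | 0 < k ∧ ∀ i j, (n : ℤ) ∣ (A ^ k - 1) i j}.Nonempty)
  exact orderOf_le_of_pow_eq_one hsmem.1 ((hiff _).mp hsmem.2)

lemma pow_sub_chi (A : Matrix (Fin 2) (Fin 2) ℤ) (hA : A.det = 1) (p : ℕ)
    (hp : p.Prime) (hp2 : p ≠ 2) (ha : ((A.trace ^ 2 - 4 : ℤ) : ZMod p) ≠ 0) :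
    (A.map (Int.cast : ℤ → ZMod p)) ^ ((p : ℤ) - chi A p).natAbs = 1 := by
  classical
  haveI : Fact p.Prime := ⟨hp⟩
  have hple := hp.two_le
  set a : ZMod p := ((A.trace ^ 2 - 4 : ℤ) : ZMod p) with hadef
  have h2 : (2 : ZMod p) ≠ 0 := by
    intro h
    have hd : p ∣ 2 := (ZMod.natCast_eq_zero_iff 2 p).mp (by exact_mod_cast h)
    exact hp2 ((Nat.prime_dvd_prime_iff_eq hp Nat.prime_two).mp hd)
  set t' : ZMod p := ((A.trace : ℤ) : ZMod p) with ht'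
  have hta : t' ^ 2 - a = 4 := by rw [hadef, ht']; push_cast; ring
  by_cases hsq : IsSquare a
  · -- χ = 1, exponent p - 1
    have hchi : chi A p = 1 := by unfold chi; rw [if_pos ⟨ha, hsq⟩]
    obtain ⟨r, hr⟩ := hsq
    have hr2 : r ^ 2 = a := by rw [hr]; ring
    have hrne : r ≠ 0 := by intro h; rw [h] at hr2; simp at hr2; exact ha hr2.symm
    set l : ZMod p := (t' + r) / 2 with hl
    set m : ZMod p := (t' - r) / 2 with hm
    have hsum : l + m = t' := by rw [hl, hm]; field_simp; ring
    have h4 : (4 : ZMod p) ≠ 0 := by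
      intro h4
      have : (2 : ZMod p) * 2 = 0 := by rw [show (2:ZMod p)*2 = 4 by norm_num, h4]
      rcases mul_eq_zero.mp this with h | h <;> exact h2 h
    have hprod : l * m = 1 := by
      rw [hl, hm, div_mul_div_comm,
        show (t' + r) * (t' - r) = t' ^ 2 - r ^ 2 by ring, hr2, hta,
        show (2 : ZMod p) * 2 = 4 by norm_num]
      exact div_self h4
    have hlm : l - m = r := by
      rw [hl, hm, div_sub_div_same, show t' + r - (t' - r) = r * 2 by ring]
      exact mul_div_cancel_right₀ r h2
    have hne : l ≠ m := fun h => hrne (by rw [← hlm, h, sub_self])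
    have hl0 : l ≠ 0 := fun h => by rw [h, zero_mul] at hprod; simp at hprod
    have hm0 : m ≠ 0 := fun h => by rw [h, mul_zero] at hprod; simp at hprod
    have hnat : ((p : ℤ) - chi A p).natAbs = p - 1 := by rw [hchi]; omega
    rw [hnat]
    exact pow_eq_one_of_roots _ t' l m (sq_map A hA) hsum hprod hne _
      (ZMod.pow_card_sub_one_eq_one hl0) (ZMod.pow_card_sub_one_eq_one hm0)
  · -- χ = -1, exponent p + 1
    have hchi : chi A p = -1 := by unfold chi; rw [if_neg (by tauto)]
    have hnat : ((p : ℤ) - chi A p).natAbs = p + 1 := by rw [hchi]; omega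
    rw [hnat]
    set K := GaloisField p 2 with hK
    set g : ZMod p →+* K := algebraMap (ZMod p) K with hg
    haveI : Fintype K := Fintype.ofFinite K
    have hginj : Function.Injective g := g.injective
    have hcardK : Fintype.card K = p ^ 2 := by
      rw [← Nat.card_eq_fintype_card, GaloisField.card p 2 (by norm_num)]
    have hringChar : ringChar K ≠ 2 := by rw [ringChar.eq K p]; exact hp2
    have hga : g a ≠ 0 := by rw [← map_zero g]; exact fun h => ha (hginj h)
    have h2K : (2 : K) ≠ 0 := by
      have : g 2 = (2 : K) := by rw [map_ofNat]
      rw [← this, ← map_zero g]; exact fun h => h2 (hginj h)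
    obtain ⟨m2, hm2⟩ := hp.odd_of_ne_two hp2
    have hqe : p ^ 2 = 4 * m2 ^ 2 + 4 * m2 + 1 := by rw [hm2]; ring
    have he : p ^ 2 / 2 = (p - 1) * (m2 + 1) := by
      have h1 : p ^ 2 / 2 = 2 * m2 ^ 2 + 2 * m2 := by omega
      have h3 : p - 1 = 2 * m2 := by omega
      rw [h1, h3]; ring
    have hap : a ^ (p - 1) = 1 := ZMod.pow_card_sub_one_eq_one ha
    have hsqK : IsSquare (g a) := by
      rw [FiniteField.isSquare_iff hringChar hga, hcardK, he, pow_mul, ← map_pow, hap,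
        _root_.map_one, one_pow]
    obtain ⟨r, hr⟩ := hsqK
    have hr2 : r ^ 2 = g a := by rw [hr]; ring
    have hrne : r ≠ 0 := by intro h; rw [h] at hr2; simp at hr2; exact hga hr2.symm
    have hfrob : r ^ p ≠ r := by
      intro hfix
      obtain ⟨y, hy⟩ := frob_fixed hfix
      apply hsq
      refine ⟨y, hginj ?_⟩
      rw [_root_.map_mul, hy, ← hr]
    have hrp : r ^ p = -r := by
      have h1 : (r ^ p) ^ 2 = r ^ 2 := by
        rw [← pow_mul, mul_comm, pow_mul, hr2, ← map_pow, ZMod.pow_card]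
      have h2' : (r ^ p - r) * (r ^ p + r) = 0 := by linear_combination h1
      rcases mul_eq_zero.mp h2' with h | h
      · exact absurd (sub_eq_zero.mp h) hfrob
      · exact eq_neg_of_add_eq_zero_left h
    set t'' : K := ((A.trace : ℤ) : K) with ht''
    have htk : g t' = t'' := by rw [ht', ht'', map_intCast]
    have htp : t'' ^ p = t'' := by rw [← htk, ← map_pow, ZMod.pow_card]
    have h2p : (2 : K) ^ p = 2 := by
      have : (2 : K) = g 2 := by rw [map_ofNat]
      rw [this, ← map_pow, ZMod.pow_card]
    have hta' : t'' ^ 2 - g a = 4 := by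
      have := congrArg g hta
      rw [map_sub, map_pow, htk, map_ofNat] at this
      exact this
    set l : K := (t'' + r) / 2 with hl
    set m : K := (t'' - r) / 2 with hm
    have hsum : l + m = t'' := by
      rw [hl, hm, ← add_div, show t'' + r + (t'' - r) = t'' * 2 by ring]
      exact mul_div_cancel_right₀ t'' h2K
    have h4K : (4 : K) ≠ 0 := by
      intro h4
      have : (2 : K) * 2 = 0 := by rw [show (2:K)*2 = 4 by norm_num, h4]
      rcases mul_eq_zero.mp this with h | h <;> exact h2K h
    have hprod : l * m = 1 := by
      rw [hl, hm, div_mul_div_comm,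
        show (t'' + r) * (t'' - r) = t'' ^ 2 - r ^ 2 by ring, hr2, hta',
        show (2 : K) * 2 = 4 by norm_num]
      exact div_self h4K
    have hlm : l - m = r := by
      rw [hl, hm, div_sub_div_same, show t'' + r - (t'' - r) = r * 2 by ring]
      exact mul_div_cancel_right₀ r h2K
    have hne : l ≠ m := fun h => hrne (by rw [← hlm, h, sub_self])
    have hlp : l ^ p = m := by
      rw [hl, hm, div_pow, add_pow_char, htp, hrp, h2p, sub_eq_add_neg]
    have hmp : m ^ p = l := by
      have : t'' - r = t'' + (-r) := by ring
      rw [hm, hl, div_pow, this, add_pow_char, htp, h2p,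
        (hp.odd_of_ne_two hp2).neg_pow, hrp, neg_neg]
    have hl1 : l ^ (p + 1) = 1 := by rw [pow_succ, hlp, mul_comm]; exact hprod
    have hm1 : m ^ (p + 1) = 1 := by rw [pow_succ, hmp, mul_comm, mul_comm m l]; exact hprod
    have hBK : (A.map (Int.cast : ℤ → K)) ^ (p + 1) = 1 :=
      pow_eq_one_of_roots _ t'' l m (sq_map A hA) hsum hprod hne _ hl1 hm1
    have hmm : A.map (Int.cast : ℤ → K) = g.mapMatrix (A.map (Int.cast : ℤ → ZMod p)) := by
      ext i j
      simp only [Matrix.map_apply, RingHom.mapMatrix_apply]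
      rw [map_intCast]
    rw [hmm, ← map_pow] at hBK
    ext i j
    apply hginj
    have h1 := (Matrix.ext_iff.mpr hBK) i j
    simp only [RingHom.mapMatrix_apply, Matrix.map_apply] at h1
    rw [h1, Matrix.one_apply, Matrix.one_apply]
    split <;> simp

lemma sqfPart_dvd (N : ℕ) (hN : N ≠ 0) : sqfPart N ∣ N := by
  conv_rhs => rw [← Nat.factorization_prod_pow_eq_self hN]
  rw [Finsupp.prod, Nat.support_factorization]
  exact Finset.prod_dvd_prod_of_dvd _ _ (fun p _ => pow_dvd_pow p (Nat.mod_le _ _))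

lemma sqfPart_ne_zero (N : ℕ) : sqfPart N ≠ 0 := by
  rw [sqfPart]
  apply Finset.prod_ne_zero_iff.mpr
  intro p hp
  exact pow_ne_zero _ (Nat.prime_of_mem_primeFactors hp).ne_zero

lemma sqfPart_factorization_le (N q : ℕ) : (sqfPart N).factorization q ≤ 1 := by
  rw [sqfPart, Nat.factorization_prod (fun p hp =>
    pow_ne_zero _ (Nat.prime_of_mem_primeFactors hp).ne_zero)]
  rw [Finsupp.finset_sum_apply]
  have : ∀ p ∈ N.primeFactors,
      (p ^ (N.factorization p % 2)).factorization q
        = if p = q then N.factorization p % 2 else 0 := by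
    intro p hp
    rw [Nat.Prime.factorization_pow (Nat.prime_of_mem_primeFactors hp), Finsupp.single_apply]
  rw [Finset.sum_congr rfl this, Finset.sum_ite_eq' N.primeFactors q
    (fun p => N.factorization p % 2)]
  split
  · omega
  · exact Nat.zero_le 1

lemma L_ineq (s : Finset ℕ) (o n : ℕ → ℕ) (h : ∀ p ∈ s, o p ∣ n p)
    (hn : ∀ p ∈ s, 0 < n p) :
    (∏ p ∈ s, o p) * s.lcm n ≤ s.lcm o * ∏ p ∈ s, n p := by
  have ho : ∀ p ∈ s, 0 < o p := by
    intro p hp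
    rcases Nat.eq_zero_or_pos (o p) with h0 | h0
    · exfalso
      have := h p hp
      rw [h0] at this
      have hz := Nat.eq_zero_of_zero_dvd this
      have hnp := hn p hp
      omega
    · exact h0
  have hlcmo_dvd : s.lcm o ∣ ∏ p ∈ s, o p :=
    Finset.lcm_dvd (fun p hp => Finset.dvd_prod_of_mem o hp)
  have hprodo_pos : 0 < ∏ p ∈ s, o p := Finset.prod_pos ho
  have hlcmo_pos : 0 < s.lcm o := Nat.pos_of_dvd_of_pos hlcmo_dvd hprodo_pos
  have hd : s.lcm n ∣ s.lcm o * ∏ p ∈ s, (n p / o p) := by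
    apply Finset.lcm_dvd
    intro p hp
    rw [← Nat.mul_div_cancel' (h p hp)]
    exact mul_dvd_mul (Finset.dvd_lcm hp) (Finset.dvd_prod_of_mem _ hp)
  have hquot_pos : 0 < ∏ p ∈ s, (n p / o p) :=
    Finset.prod_pos (fun p hp => Nat.div_pos (Nat.le_of_dvd (hn p hp) (h p hp)) (ho p hp))
  have hle : s.lcm n ≤ s.lcm o * ∏ p ∈ s, (n p / o p) :=
    Nat.le_of_dvd (Nat.mul_pos hlcmo_pos hquot_pos) hd
  calc (∏ p ∈ s, o p) * s.lcm n
      ≤ (∏ p ∈ s, o p) * (s.lcm o * ∏ p ∈ s, (n p / o p)) :=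
        Nat.mul_le_mul_left _ hle
    _ = s.lcm o * ((∏ p ∈ s, o p) * ∏ p ∈ s, (n p / o p)) := by ring
    _ = s.lcm o * ∏ p ∈ s, (o p * (n p / o p)) := by rw [← Finset.prod_mul_distrib]
    _ = s.lcm o * ∏ p ∈ s, n p := by
        congr 1
        exact Finset.prod_congr rfl (fun p hp => Nat.mul_div_cancel' (h p hp))

/-- `ord(A,N) ≥ (∏_{p ∣ d₀(N)} ord(A,p)) / L(N)`. -/
theorem order_ge_prod_div_LN
    (A : Matrix (Fin 2) (Fin 2) ℤ) (hA : A.det = 1) (htr : 2 < |A.trace|) :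
    ∀ N : ℕ, 1 ≤ N →
      (∏ p ∈ (dZero A N).primeFactors, (matOrd A p : ℝ)) / (LN A N : ℝ) ≤
        (matOrd A N : ℝ) := by
  intro N hN
  have hN0 : N ≠ 0 := by omega
  haveI : NeZero N := ⟨hN0⟩
  have hGd : Nat.gcd (sqfPart N) (4 * (A.trace ^ 2 - 4)).natAbs ∣ sqfPart N :=
    Nat.gcd_dvd_left _ _
  have hd0d : dZero A N ∣ sqfPart N := Nat.div_dvd_of_dvd hGd
  have hdN : sqfPart N ∣ N := sqfPart_dvd N hN0
  have hfacts : ∀ p ∈ (dZero A N).primeFactors,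
      p.Prime ∧ p ∣ N ∧ p ≠ 2 ∧ ((A.trace ^ 2 - 4 : ℤ) : ZMod p) ≠ 0 := by
    intro p hp
    have hpp : p.Prime := Nat.prime_of_mem_primeFactors hp
    have hpd0 : p ∣ dZero A N := Nat.dvd_of_mem_primeFactors hp
    have hpD : ¬ p ∣ (4 * (A.trace ^ 2 - 4)).natAbs := by
      intro hpD
      have hpG : p ∣ Nat.gcd (sqfPart N) (4 * (A.trace ^ 2 - 4)).natAbs :=
        Nat.dvd_gcd (hpd0.trans hd0d) hpD
      have hsq : p ^ 2 ∣ sqfPart N := by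
        have hdg : dZero A N * Nat.gcd (sqfPart N) (4 * (A.trace ^ 2 - 4)).natAbs
            = sqfPart N := Nat.div_mul_cancel hGd
        rw [← hdg, pow_two]
        exact mul_dvd_mul hpd0 hpG
      have h2le : 2 ≤ (sqfPart N).factorization p :=
        (Nat.Prime.pow_dvd_iff_le_factorization hpp (sqfPart_ne_zero N)).mp hsq
      have := sqfPart_factorization_le N p
      omega
    refine ⟨hpp, (hpd0.trans hd0d).trans hdN, ?_, ?_⟩
    · rintro rfl
      apply hpD
      have h2d : (2 : ℤ) ∣ 4 * (A.trace ^ 2 - 4) := ⟨2 * (A.trace ^ 2 - 4), by ring⟩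
      have := Int.natAbs_dvd_natAbs.mpr h2d
      simpa using this
    · intro h0
      apply hpD
      have h1 : (p : ℤ) ∣ A.trace ^ 2 - 4 := (ZMod.intCast_zmod_eq_zero_iff_dvd _ p).mp h0
      have h2 : (p : ℤ) ∣ 4 * (A.trace ^ 2 - 4) := Dvd.dvd.mul_left h1 4
      have := Int.natAbs_dvd_natAbs.mpr h2
      simpa using this
  have hnpos : ∀ p ∈ (dZero A N).primeFactors, 0 < ((p : ℤ) - chi A p).natAbs := by
    intro p hp
    have h2le := (hfacts p hp).1.two_le
    rcases chi_cases A p with h | h <;> rw [h] <;> omega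
  have hodvd : ∀ p ∈ (dZero A N).primeFactors, matOrd A p ∣ ((p : ℤ) - chi A p).natAbs := by
    intro p hp
    obtain ⟨hpp, _, hp2, ha⟩ := hfacts p hp
    haveI : NeZero p := ⟨hpp.ne_zero⟩
    rw [matOrd_eq_orderOf A hA p]
    exact orderOf_dvd_of_pow_eq_one (pow_sub_chi A hA p hpp hp2 ha)
  have hoN : ∀ p ∈ (dZero A N).primeFactors, matOrd A p ∣ matOrd A N := by
    intro p hp
    obtain ⟨hpp, hpN, _, _⟩ := hfacts p hp
    haveI : NeZero p := ⟨hpp.ne_zero⟩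
    rw [matOrd_eq_orderOf A hA p]
    apply orderOf_dvd_of_pow_eq_one
    have hNpow : (A.map (Int.cast : ℤ → ZMod N)) ^ matOrd A N = 1 := by
      rw [matOrd_eq_orderOf A hA N]; exact pow_orderOf_eq_one _
    have hcomm : A.map (Int.cast : ℤ → ZMod p)
        = (ZMod.castHom hpN (ZMod p)).mapMatrix (A.map (Int.cast : ℤ → ZMod N)) := by
      ext i j
      simp only [Matrix.map_apply, RingHom.mapMatrix_apply]
      rw [map_intCast]
    rw [hcomm, ← map_pow, hNpow, _root_.map_one]
  have hopos : ∀ p ∈ (dZero A N).primeFactors, 0 < matOrd A p := by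
    intro p hp
    obtain ⟨hpp, _, _, _⟩ := hfacts p hp
    haveI : NeZero p := ⟨hpp.ne_zero⟩
    rw [matOrd_eq_orderOf A hA p]
    exact orderOf_map_pos A hA p
  have hMpos : 0 < matOrd A N := by
    rw [matOrd_eq_orderOf A hA N]; exact orderOf_map_pos A hA N
  have hlcm_le : (dZero A N).primeFactors.lcm (fun p => matOrd A p) ≤ matOrd A N :=
    Nat.le_of_dvd hMpos (Finset.lcm_dvd hoN)
  have hlcmn_dvd : (dZero A N).primeFactors.lcm (fun p => ((p : ℤ) - chi A p).natAbs)
      ∣ ∏ p ∈ (dZero A N).primeFactors, ((p : ℤ) - chi A p).natAbs :=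
    Finset.lcm_dvd (fun p hp => Finset.dvd_prod_of_mem _ hp)
  have hprodn_pos : 0 < ∏ p ∈ (dZero A N).primeFactors, ((p : ℤ) - chi A p).natAbs :=
    Finset.prod_pos hnpos
  have hlcmn_pos : 0 < (dZero A N).primeFactors.lcm (fun p => ((p : ℤ) - chi A p).natAbs) :=
    Nat.pos_of_dvd_of_pos hlcmn_dvd hprodn_pos
  have hLN : LN A N * (dZero A N).primeFactors.lcm (fun p => ((p : ℤ) - chi A p).natAbs)
      = ∏ p ∈ (dZero A N).primeFactors, ((p : ℤ) - chi A p).natAbs := by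
    unfold LN
    exact Nat.div_mul_cancel hlcmn_dvd
  have hLNpos : 0 < LN A N := by
    unfold LN
    exact Nat.div_pos (Nat.le_of_dvd hprodn_pos hlcmn_dvd) hlcmn_pos
  have hkey := L_ineq (dZero A N).primeFactors (fun p => matOrd A p)
    (fun p => ((p : ℤ) - chi A p).natAbs) hodvd hnpos
  have hfin : (∏ p ∈ (dZero A N).primeFactors, matOrd A p) ≤ matOrd A N * LN A N := by
    apply Nat.le_of_mul_le_mul_right _ hlcmn_pos
    calc (∏ p ∈ (dZero A N).primeFactors, matOrd A p)
          * (dZero A N).primeFactors.lcm (fun p => ((p : ℤ) - chi A p).natAbs)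
        ≤ (dZero A N).primeFactors.lcm (fun p => matOrd A p)
          * ∏ p ∈ (dZero A N).primeFactors, ((p : ℤ) - chi A p).natAbs := hkey
      _ = (dZero A N).primeFactors.lcm (fun p => matOrd A p)
          * (LN A N * (dZero A N).primeFactors.lcm (fun p => ((p : ℤ) - chi A p).natAbs)) := by
          rw [hLN]
      _ ≤ matOrd A N
          * (LN A N * (dZero A N).primeFactors.lcm (fun p => ((p : ℤ) - chi A p).natAbs)) :=
          Nat.mul_le_mul_right _ hlcm_le
      _ = matOrd A N * LN A N
          * (dZero A N).primeFactors.lcm (fun p => ((p : ℤ) - chi A p).natAbs) := by ring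
  rw [div_le_iff₀ (by exact_mod_cast hLNpos)]
  calc (∏ p ∈ (dZero A N).primeFactors, (matOrd A p : ℝ))
      = ((∏ p ∈ (dZero A N).primeFactors, matOrd A p : ℕ) : ℝ) := by push_cast; rfl
    _ ≤ ((matOrd A N * LN A N : ℕ) : ℝ) := by exact_mod_cast hfin
    _ = (matOrd A N : ℝ) * (LN A N : ℝ) := by push_cast; rfl
end

section
/- There is a constant C > 0 (depending on A) such that for every y ≥ 1, the number of primes p with ord(A,p) ≤ y is at most C·y². -/
open Matrix

namespace FewPrimesAux

/-- Cayley–Hamilton for 2×2 integer matrices with determinant 1. -/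
lemma cayley (A : Matrix (Fin 2) (Fin 2) ℤ) (hA : A.det = 1) :
    A * A = A.trace • A - 1 := by
  have hd := Matrix.det_fin_two A
  rw [hA] at hd
  ext i j
  simp only [Matrix.mul_apply, Fin.sum_univ_two, Matrix.sub_apply,
    Matrix.smul_apply, smul_eq_mul, Matrix.one_apply, Matrix.trace_fin_two]
  fin_cases i <;> fin_cases j <;> simp <;> nlinarith [hd]

/-- A hyperbolic matrix has no power equal to the identity. -/
lemma pow_ne_one (A : Matrix (Fin 2) (Fin 2) ℤ) (hA : A.det = 1)
    (htr : 2 < |A.trace|) : ∀ k, 0 < k → A ^ k ≠ 1 := by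
  have hch := cayley A hA
  have hrec : ∀ k : ℕ, (A ^ (k + 2)).trace
      = A.trace * (A ^ (k + 1)).trace - (A ^ k).trace := by
    intro k
    have h1 : A ^ (k + 2) = A.trace • A ^ (k + 1) - A ^ k := by
      have h2 : A ^ (k + 2) = A ^ k * (A * A) := by rw [pow_add, pow_two]
      rw [h2, hch, mul_sub, mul_one, Matrix.mul_smul, ← pow_succ]
    rw [h1, Matrix.trace_sub, Matrix.trace_smul, smul_eq_mul]
  have htr3 : 3 ≤ |A.trace| := htr
  have key : ∀ k : ℕ, 3 ≤ |(A ^ (k + 1)).trace| ∧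
      |(A ^ k).trace| ≤ |(A ^ (k + 1)).trace| := by
    intro k
    induction k with
    | zero =>
      constructor
      · simpa using htr3
      · have h0 : |(A ^ 0).trace| = 2 := by simp [Matrix.trace_one]
        have h1 : A ^ (0 + 1) = A := by simp
        rw [h0, h1]
        linarith
    | succ n ih =>
      obtain ⟨ih1, ih2⟩ := ih
      have hr := hrec n
      have habs : |A.trace * (A ^ (n + 1)).trace| - |(A ^ n).trace|
          ≤ |(A ^ (n + 2)).trace| := by
        rw [hr]
        exact abs_sub_abs_le_abs_sub _ _
      rw [abs_mul] at habs
      constructor <;> nlinarith [abs_nonneg ((A ^ (n+1)).trace)]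
  intro k hk hone
  obtain ⟨k, rfl⟩ : ∃ m, k = m + 1 := ⟨k - 1, by omega⟩
  have h3 := (key k).1
  rw [hone] at h3
  have : ((1 : Matrix (Fin 2) (Fin 2) ℤ)).trace = 2 := by
    simp [Matrix.trace_one]
  rw [this] at h3
  norm_num at h3

/-- For a prime `p`, some positive power of `A` is ≡ 1 mod `p`. -/
lemma exists_pow_cong (A : Matrix (Fin 2) (Fin 2) ℤ) (hA : A.det = 1)
    (p : ℕ) (hp : p.Prime) :
    ∃ k, 0 < k ∧ ∀ i j, (p : ℤ) ∣ (A ^ k - 1) i j := by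
  haveI : Fact p.Prime := ⟨hp⟩
  set B : Matrix (Fin 2) (Fin 2) (ZMod p) := A.map (Int.cast) with hB
  have hmap : ∀ k : ℕ, (A ^ k).map (Int.cast : ℤ → ZMod p) = B ^ k := by
    intro k
    have := map_pow ((Int.castRingHom (ZMod p)).mapMatrix) A k
    simpa [RingHom.mapMatrix_apply] using this
  have hdet : IsUnit B.det := by
    have h1 : B.det = ((A.det : ℤ) : ZMod p) := by
      rw [hB]
      exact ((Int.castRingHom (ZMod p)).map_det A).symm
    rw [h1, hA]
    simp
  obtain ⟨u, hu⟩ := (Matrix.isUnit_iff_isUnit_det B).mpr hdet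
  refine ⟨orderOf u, orderOf_pos u, ?_⟩
  have hu1 : B ^ (orderOf u) = 1 := by
    rw [← hu, ← Units.val_pow_eq_pow_val, pow_orderOf_eq_one, Units.val_one]
  intro i j
  rw [← ZMod.intCast_zmod_eq_zero_iff_dvd]
  have h1 : (((A ^ (orderOf u)) i j : ℤ) : ZMod p) = (B ^ (orderOf u)) i j := by
    rw [← hmap]
    simp [Matrix.map_apply]
  have h2 : ((A ^ (orderOf u) - 1) i j : ℤ) = (A ^ (orderOf u)) i j
      - (1 : Matrix (Fin 2) (Fin 2) ℤ) i j := by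
    simp [Matrix.sub_apply]
  rw [h2]
  push_cast
  rw [h1, hu1]
  simp [Matrix.one_apply]

/-- Entry growth bound for powers. -/
lemma entry_bound (A : Matrix (Fin 2) (Fin 2) ℤ) (m : ℤ) (hm1 : 1 ≤ m)
    (hm : ∀ i j, |A i j| ≤ m) :
    ∀ k, ∀ i j, |(A ^ k) i j| ≤ (2 * m) ^ k := by
  intro k
  induction k with
  | zero =>
    intro i j
    simp [Matrix.one_apply]
    split_ifs <;> norm_num
  | succ k ih =>
    intro i j
    rw [pow_succ, Matrix.mul_apply, Fin.sum_univ_two, pow_succ]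
    have h0 := ih i 0
    have h1 := ih i 1
    have hb0 := hm 0 j
    have hb1 := hm 1 j
    calc |(A ^ k) i 0 * A 0 j + (A ^ k) i 1 * A 1 j|
        ≤ |(A ^ k) i 0 * A 0 j| + |(A ^ k) i 1 * A 1 j| := abs_add_le _ _
      _ = |(A ^ k) i 0| * |A 0 j| + |(A ^ k) i 1| * |A 1 j| := by
          rw [abs_mul, abs_mul]
      _ ≤ (2 * m) ^ k * (2 * m) := by
          nlinarith [abs_nonneg ((A ^ k) i 0), abs_nonneg ((A ^ k) i 1),
            abs_nonneg (A 0 j), abs_nonneg (A 1 j),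
            pow_nonneg (by linarith : (0:ℤ) ≤ 2 * m) k]

end FewPrimesAux

open FewPrimesAux

/-- The number of primes `p` with `ord(A,p) ≤ y` is `O(y²)`. -/
theorem few_primes_with_small_order
    (A : Matrix (Fin 2) (Fin 2) ℤ) (hA : A.det = 1) (htr : 2 < |A.trace|) :
    ∃ C : ℝ, 0 < C ∧ ∀ y : ℝ, 1 ≤ y →
      {p : ℕ | p.Prime ∧ (matOrd A p : ℝ) ≤ y}.Finite ∧
      ({p : ℕ | p.Prime ∧ (matOrd A p : ℝ) ≤ y}.ncard : ℝ) ≤ C * y ^ 2 := by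
  classical
  -- entry bound
  obtain ⟨Mn, hMn1, hMabs⟩ : ∃ M : ℕ, 1 ≤ M ∧ ∀ i j, |A i j| ≤ (M : ℤ) := by
    refine ⟨(A 0 0).natAbs + (A 0 1).natAbs + (A 1 0).natAbs
      + (A 1 1).natAbs + 1, by omega, ?_⟩
    have key : ∀ i j : Fin 2, (A i j).natAbs ≤ (A 0 0).natAbs + (A 0 1).natAbs
        + (A 1 0).natAbs + (A 1 1).natAbs + 1 := by
      intro i j
      fin_cases i <;> fin_cases j
      · show (A 0 0).natAbs ≤ _; omega
      · show (A 0 1).natAbs ≤ _; omega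
      · show (A 1 0).natAbs ≤ _; omega
      · show (A 1 1).natAbs ≤ _; omega
    intro i j
    rw [Int.abs_eq_natAbs]
    exact_mod_cast key i j
  have hE := entry_bound A (Mn : ℤ) (by exact_mod_cast hMn1) hMabs
  -- bound on entries of A^k - 1, in ℕ
  have hE2 : ∀ k, 1 ≤ k → ∀ i j, ((A ^ k - 1) i j).natAbs ≤ (4 * Mn) ^ k := by
    intro k hk i j
    have h1 : |(A ^ k - 1) i j| ≤ (2 * (Mn : ℤ)) ^ k + 1 := by
      have h2 : (A ^ k - 1) i j = (A ^ k) i j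
          - (1 : Matrix (Fin 2) (Fin 2) ℤ) i j := by simp [Matrix.sub_apply]
      rw [h2]
      have h3 : |(1 : Matrix (Fin 2) (Fin 2) ℤ) i j| ≤ 1 := by
        simp [Matrix.one_apply]
        split_ifs <;> norm_num
      have h4 := hE k i j
      calc |(A ^ k) i j - (1 : Matrix (Fin 2) (Fin 2) ℤ) i j|
          ≤ |(A ^ k) i j| + |(1 : Matrix (Fin 2) (Fin 2) ℤ) i j| := abs_sub _ _
        _ ≤ (2 * (Mn : ℤ)) ^ k + 1 := by linarith
    have h5 : (2 * (Mn : ℤ)) ^ k + 1 ≤ (4 * (Mn : ℤ)) ^ k := by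
      have hp1 : (1 : ℤ) ≤ (2 * (Mn : ℤ)) ^ k :=
        one_le_pow₀ (by exact_mod_cast Nat.one_le_iff_ne_zero.mpr (by omega))
      have h6 : (4 * (Mn : ℤ)) ^ k = 2 ^ k * (2 * (Mn : ℤ)) ^ k := by
        rw [← mul_pow]; ring_nf
      have h7 : (2 : ℤ) ≤ 2 ^ k := by
        calc (2:ℤ) = 2 ^ 1 := by norm_num
          _ ≤ 2 ^ k := pow_le_pow_right₀ (by norm_num) hk
      rw [h6]
      nlinarith
    have h8 : |(A ^ k - 1) i j| ≤ (((4 * Mn) ^ k : ℕ) : ℤ) := by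
      have hc : (((4 * Mn) ^ k : ℕ) : ℤ) = (4 * (Mn : ℤ)) ^ k := by
        push_cast; ring
      rw [hc]
      linarith
    rw [Int.abs_eq_natAbs] at h8
    exact_mod_cast h8
  -- the integer whose prime factors contain all primes of order exactly k
  set N : ℕ → ℕ := fun k =>
    ∏ ij : Fin 2 × Fin 2, max 1 ((A ^ k - 1) ij.1 ij.2).natAbs with hN
  have hNpos : ∀ k, 0 < N k := by
    intro k
    apply Finset.prod_pos
    intro ij _
    exact lt_of_lt_of_le one_pos (le_max_left _ _)
  have hNle : ∀ k, 1 ≤ k → N k ≤ 2 ^ (16 * Mn * k) := by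
    intro k hk
    have h1 : N k ≤ ((4 * Mn) ^ k) ^ 4 := by
      have := Finset.prod_le_pow_card (Finset.univ : Finset (Fin 2 × Fin 2))
        (fun ij => max 1 ((A ^ k - 1) ij.1 ij.2).natAbs) ((4 * Mn) ^ k)
        (by
          intro ij _
          apply max_le
          · exact Nat.one_le_pow _ _ (by omega)
          · exact hE2 k hk ij.1 ij.2)
      simpa [hN] using this
    have h2 : ((4 * Mn) ^ k) ^ 4 ≤ 2 ^ (16 * Mn * k) := by
      have h3 : 4 * Mn ≤ 2 ^ (4 * Mn) := le_of_lt (Nat.lt_two_pow_self (n := _))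
      calc ((4 * Mn) ^ k) ^ 4 ≤ ((2 ^ (4 * Mn)) ^ k) ^ 4 := by
            apply Nat.pow_le_pow_left
            exact Nat.pow_le_pow_left h3 k
        _ = 2 ^ (16 * Mn * k) := by
            rw [← pow_mul, ← pow_mul]; ring_nf
    exact h1.trans h2
  have hcard : ∀ k, 1 ≤ k → (N k).primeFactors.card ≤ 16 * Mn * k := by
    intro k hk
    have h1 : 2 ^ (N k).primeFactors.card ≤ N k := by
      calc 2 ^ (N k).primeFactors.card
          ≤ ∏ p ∈ (N k).primeFactors, p :=
            Finset.pow_card_le_prod _ _ _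
              (fun p hp => (Nat.prime_of_mem_primeFactors hp).two_le)
        _ ≤ N k := Nat.le_of_dvd (hNpos k) (Nat.prod_primeFactors_dvd _)
    have h2 : (2:ℕ) ^ (N k).primeFactors.card ≤ 2 ^ (16 * Mn * k) :=
      h1.trans (hNle k hk)
    exact (Nat.pow_le_pow_iff_right (by norm_num)).mp h2
  refine ⟨16 * Mn, by
    have : (1:ℝ) ≤ (Mn:ℝ) := by exact_mod_cast hMn1
    linarith, ?_⟩
  intro y hy
  set K : ℕ := ⌊y⌋₊ with hK
  set S : Finset ℕ := (Finset.Icc 1 K).biUnion (fun k => (N k).primeFactors)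
    with hS
  have hsub : {p : ℕ | p.Prime ∧ (matOrd A p : ℝ) ≤ y} ⊆ ↑S := by
    intro p hp
    obtain ⟨hpp, hpy⟩ := hp
    have hne : {k | 0 < k ∧ ∀ i j, (p : ℤ) ∣ (A ^ k - 1) i j}.Nonempty := by
      obtain ⟨k, hk1, hk2⟩ := exists_pow_cong A hA p hpp
      exact ⟨k, hk1, hk2⟩
    have hmem := Nat.sInf_mem hne
    set k : ℕ := matOrd A p with hkdef
    obtain ⟨hk1, hk2⟩ := hmem
    have hkK : k ≤ K := Nat.le_floor hpy
    -- find a nonzero entry of A^k - 1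
    have hAk : A ^ k - 1 ≠ 0 :=
      sub_ne_zero.mpr (pow_ne_one A hA htr k hk1)
    have hex : ∃ i j, (A ^ k - 1) i j ≠ 0 := by
      by_contra hcon
      push_neg at hcon
      exact hAk (by ext i j; simpa using hcon i j)
    obtain ⟨i, j, hij⟩ := hex
    have hdvd : p ∣ ((A ^ k - 1) i j).natAbs := by
      have := Int.natAbs_dvd_natAbs.mpr (hk2 i j)
      rw [Int.natAbs_natCast] at this; exact this
    have hfac : max 1 ((A ^ k - 1) i j).natAbs = ((A ^ k - 1) i j).natAbs :=
      max_eq_right (Nat.one_le_iff_ne_zero.mpr (Int.natAbs_ne_zero.mpr hij))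
    have hpN : p ∣ N k := by
      have h1 : max 1 ((A ^ k - 1) i j).natAbs ∣ N k := by
        exact Finset.dvd_prod_of_mem _ (Finset.mem_univ ((i, j) : Fin 2 × Fin 2))
      rw [hfac] at h1
      exact hdvd.trans h1
    simp only [Finset.coe_biUnion, Set.mem_iUnion, Finset.mem_coe, hS]
    refine ⟨k, ?_, ?_⟩
    · simp only [Finset.mem_coe, Finset.mem_Icc]
      exact ⟨hk1, hkK⟩
    · exact Nat.mem_primeFactors.mpr ⟨hpp, hpN, (hNpos k).ne'⟩
  have hfin : {p : ℕ | p.Prime ∧ (matOrd A p : ℝ) ≤ y}.Finite :=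
    Set.Finite.subset S.finite_toSet hsub
  refine ⟨hfin, ?_⟩
  have hcard1 : {p : ℕ | p.Prime ∧ (matOrd A p : ℝ) ≤ y}.ncard ≤ S.card := by
    have := Set.ncard_le_ncard hsub S.finite_toSet
    rwa [Set.ncard_coe_finset] at this
  have hcard2 : S.card ≤ 16 * Mn * K * K := by
    calc S.card ≤ ∑ k ∈ Finset.Icc 1 K, (N k).primeFactors.card :=
          Finset.card_biUnion_le
      _ ≤ ∑ _k ∈ Finset.Icc 1 K, 16 * Mn * K := by
          apply Finset.sum_le_sum
          intro k hk
          rw [Finset.mem_Icc] at hk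
          exact (hcard k hk.1).trans
            (Nat.mul_le_mul_left _ hk.2)
      _ = (Finset.Icc 1 K).card * (16 * Mn * K) := by
          rw [Finset.sum_const, smul_eq_mul]
      _ ≤ K * (16 * Mn * K) := by
          apply Nat.mul_le_mul_right
          simp [Nat.card_Icc]
      _ = 16 * Mn * K * K := by ring
  have hKy : (K : ℝ) ≤ y := Nat.floor_le (by linarith)
  have hK0 : (0:ℝ) ≤ (K:ℝ) := Nat.cast_nonneg _
  calc ({p : ℕ | p.Prime ∧ (matOrd A p : ℝ) ≤ y}.ncard : ℝ)
      ≤ (S.card : ℝ) := by exact_mod_cast hcard1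
    _ ≤ ((16 * Mn * K * K : ℕ) : ℝ) := by exact_mod_cast hcard2
    _ = 16 * (Mn : ℝ) * (K : ℝ) * (K : ℝ) := by push_cast; ring
    _ ≤ 16 * (Mn : ℝ) * y ^ 2 := by
        have h1 : (K:ℝ) * K ≤ y * y := mul_le_mul hKy hKy hK0 (hK0.trans hKy)
        have h2 : (0:ℝ) ≤ 16 * (Mn:ℝ) := by positivity
        nlinarith [h1, h2]
    _ = (16 * Mn : ℝ) * y ^ 2 := by ring
end
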